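/- arXiv:2001.11709 — 5 statements merged into one kernel-verified Lean document; each statement's English description precedes it below -/
import Mathlib

section
/- Let G be a connected directed multigraph on a nonempty finite vertex set V with finite edge set E, and let B be its signed incidence matrix. Then the space ℝ^E of vector fields on G decomposes as the orthogonal direct sum of the kernel of the linear map u ↦ B u (the divergence-free fields) and the range of the linear map f ↦ Bᵀ f (the conservative fields); moreover the space of conservative fields has dimension |V| − 1 and the space of divergence-free fields has dimension |E| − |V| + 1. -/
open Matrix

/-- The signed incidence matrix of the directed multigraph on vertex set `V` with
edge set `E` given by maps `head tail : E → V`. -/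
noncomputable def incidenceMatrix {V E : Type*} [DecidableEq V]
    (head tail : E → V) : Matrix V E ℝ := fun i e =>
  if head e = tail e then 0
  else if i = head e then 1
  else if i = tail e then -1
  else 0

/-- The simple graph underlying the directed multigraph given by `head, tail`:
`u` is adjacent to `v` iff `u ≠ v` and some edge `e` has `{head e, tail e} = {u, v}`. -/
def underlyingGraph {V E : Type*} (head tail : E → V) : SimpleGraph V where
  Adj u v := u ≠ v ∧ ∃ e, (head e = u ∧ tail e = v) ∨ (head e = v ∧ tail e = u)
  symm := by
    constructor
    rintro u v ⟨huv, e, he⟩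
    exact ⟨huv.symm, e, he.symm⟩
  loopless := by
    constructor
    rintro v ⟨hv, -⟩
    exact hv rfl

theorem incidence_transpose_apply {V E : Type*} [Fintype V] [Fintype E] [DecidableEq V]
    (head tail : E → V) (f : EuclideanSpace ℝ V) (e : E) :
    Matrix.toEuclideanLin (incidenceMatrix head tail)ᵀ f e
      = if head e = tail e then 0 else f (head e) - f (tail e) := by
  simp only [toEuclideanLin_apply, mulVec, dotProduct,
    transpose_apply, incidenceMatrix]
  by_cases h1 : head e = tail e
  · simp [h1]
  · simp only [h1, if_false, if_neg h1]
    rw [Finset.sum_congr rfl (fun i _ => show _ =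
        (if i = head e then f i else 0) - (if i = tail e then f i else 0) by
      split_ifs with h2 h3 h4
      · exact absurd (h2 ▸ h3) h1
      · subst h2; simp
      · subst h4; simp
      · ring)]
    rw [Finset.sum_sub_distrib]
    simp

/-- The vector space `ℝ^E` of vector fields on a connected directed multigraph `G`
decomposes as the orthogonal direct sum of the divergence-free fields `ker (u ↦ B u)`
and the conservative fields `range (f ↦ Bᵀ f)`; the conservative fields have
dimension `|V| - 1` and the divergence-free fields dimension `|E| - |V| + 1`. -/
theorem divergence_free_conservative_decomposition
    {V E : Type*} [Fintype V] [Fintype E] [DecidableEq V] [DecidableEq E] [Nonempty V]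
    (head tail : E → V) (hconn : (underlyingGraph head tail).Connected)
    (B : Matrix V E ℝ) (hB : B = incidenceMatrix head tail) :
    (LinearMap.ker (Matrix.toEuclideanLin B))ᗮ
      = LinearMap.range (Matrix.toEuclideanLin Bᵀ) ∧
    Module.finrank ℝ (LinearMap.range (Matrix.toEuclideanLin Bᵀ)) + 1 = Fintype.card V ∧
    Module.finrank ℝ (LinearMap.ker (Matrix.toEuclideanLin B)) + Fintype.card V
      = Fintype.card E + 1 := by
  set T := Matrix.toEuclideanLin B with hT
  set S := Matrix.toEuclideanLin Bᵀ with hS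
  have hadj : S = LinearMap.adjoint T := by
    rw [hS, hT, ← Matrix.toEuclideanLin_conjTranspose_eq_adjoint,
      conjTranspose_eq_transpose_of_trivial]
  -- ker T = (range S)ᗮ
  have hker : LinearMap.ker T = (LinearMap.range S)ᗮ := by
    ext x
    simp only [LinearMap.mem_ker, Submodule.mem_orthogonal]
    constructor
    · rintro hx u ⟨v, rfl⟩
      rw [hadj, LinearMap.adjoint_inner_left, hx, inner_zero_right]
    · intro h
      have h2 := h (S (T x)) ⟨T x, rfl⟩
      rw [hadj, LinearMap.adjoint_inner_left] at h2
      exact inner_self_eq_zero.mp h2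
  have hdecomp : (LinearMap.ker T)ᗮ = LinearMap.range S := by
    rw [hker, Submodule.orthogonal_orthogonal]
  -- ker S is spanned by the constant function 1
  set o : EuclideanSpace ℝ V := (WithLp.equiv 2 (V → ℝ)).symm (fun _ => 1) with ho'
  obtain ⟨v0⟩ := ‹Nonempty V›
  have ho : o ≠ 0 := by
    intro h
    have := congrArg (fun x : EuclideanSpace ℝ V => x v0) h
    simp [ho'] at this
  have hkerS : LinearMap.ker S = Submodule.span ℝ {o} := by
    apply le_antisymm
    · intro f hf
      rw [Submodule.mem_span_singleton]
      refine ⟨f v0, ?_⟩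
      have hedge : ∀ e, head e ≠ tail e → f (head e) = f (tail e) := by
        intro e he
        have h0 : S f e = 0 := by rw [LinearMap.mem_ker.mp hf]; rfl
        rw [hS, hB, incidence_transpose_apply, if_neg he] at h0
        linarith
      have hconst : ∀ u v : V, f u = f v := by
        intro u v
        obtain ⟨w⟩ := hconn.preconnected u v
        induction w with
        | nil => rfl
        | cons h p ih =>
          obtain ⟨hne, e, he⟩ := h
          refine Eq.trans ?_ ih
          rcases he with ⟨h1, h2⟩ | ⟨h1, h2⟩
          · have := hedge e (by rw [h1, h2]; exact hne)
            rw [h1, h2] at this; exact this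
          · have := hedge e (by rw [h1, h2]; exact fun hh => hne hh.symm)
            rw [h1, h2] at this; exact this.symm
      ext i
      show f v0 * o i = f i
      have : o i = 1 := rfl
      rw [this, mul_one]
      exact (hconst i v0).symm
    · rw [Submodule.span_le, Set.singleton_subset_iff]
      rw [SetLike.mem_coe, LinearMap.mem_ker]
      ext e
      rw [hS, hB, incidence_transpose_apply]
      have h1 : o (head e) = 1 := rfl
      have h2 : o (tail e) = 1 := rfl
      rw [h1, h2]
      simp
  have hfinV : Module.finrank ℝ (EuclideanSpace ℝ V) = Fintype.card V :=
    finrank_euclideanSpace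
  have hfinE : Module.finrank ℝ (EuclideanSpace ℝ E) = Fintype.card E :=
    finrank_euclideanSpace
  have hkS1 : Module.finrank ℝ (LinearMap.ker S) = 1 := by
    rw [hkerS]; exact finrank_span_singleton ho
  have hrn : Module.finrank ℝ (LinearMap.range S) + Module.finrank ℝ (LinearMap.ker S)
      = Fintype.card V := by
    rw [← hfinV]; exact LinearMap.finrank_range_add_finrank_ker S
  have goal2 : Module.finrank ℝ (LinearMap.range S) + 1 = Fintype.card V := by
    rw [← hkS1]; exact hrn
  have horth : Module.finrank ℝ (LinearMap.ker T) + Module.finrank ℝ ((LinearMap.ker T)ᗮ)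
      = Fintype.card E := by
    rw [← hfinE]; exact Submodule.finrank_add_finrank_orthogonal _
  rw [hdecomp] at horth
  exact ⟨hdecomp, goal2, by omega⟩
end

section
/- Let B be the signed incidence matrix of a directed multigraph G and let P be the Moore–Penrose pseudoinverse of Bᵀ. Let γ be the product over E of standard real Gaussian measures (mean 0, variance 1) on ℝ^E. Then the coordinates w = Bᵀ P y of a Gaussian random embedding have covariance matrix Bᵀ P: for all edges i, j ∈ E, ∫ (Bᵀ P y)_i (Bᵀ P y)_j dγ(y) = (Bᵀ P)_{ij}. -/
open Matrix

/-- `P` is the Moore–Penrose pseudoinverse of `A` if the four Moore–Penrose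
conditions hold. -/
def IsMoorePenroseInverse {m n : Type*} [Fintype m] [Fintype n]
    (A : Matrix m n ℝ) (P : Matrix n m ℝ) : Prop :=
  A * P * A = A ∧ P * A * P = P ∧ (A * P)ᵀ = A * P ∧ (P * A)ᵀ = P * A

open Real MeasureTheory ProbabilityTheory Filter Set
open scoped ENNReal NNReal

open Real MeasureTheory ProbabilityTheory Filter Set
open scoped ENNReal NNReal

lemma gaussAux_sq_integrable :
    Integrable (fun x : ℝ => x ^ 2 * rexp (-(2⁻¹:ℝ) * x ^ 2)) := by
  have h := integrable_rpow_mul_exp_neg_mul_sq (b := (2⁻¹:ℝ)) (by norm_num) (s := 2) (by norm_num)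
  have he : ∀ x : ℝ, x ^ (2:ℝ) = x ^ (2:ℕ) := fun x => by
    rw [← Real.rpow_natCast x 2]; norm_num
  simpa [he] using h

lemma gaussAux_deriv (x : ℝ) :
    HasDerivAt (fun x : ℝ => x * rexp (-(2⁻¹:ℝ) * x ^ 2))
      ((1 - x ^ 2) * rexp (-(2⁻¹:ℝ) * x ^ 2)) x := by
  have h1 : HasDerivAt (fun x : ℝ => -(2⁻¹:ℝ) * x ^ 2) (-(2⁻¹:ℝ) * (2 * x ^ 1)) x :=
    (hasDerivAt_pow 2 x).const_mul _
  have h2 := h1.exp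
  have h3 : HasDerivAt (fun y => id y * rexp (-(2⁻¹:ℝ) * y ^ 2)) _ x := (hasDerivAt_id x).mul h2
  convert h3 using 1
  all_goals simp only [id_eq]
  ring

lemma gaussAux_tendsto_top :
    Tendsto (fun x : ℝ => x * rexp (-(2⁻¹:ℝ) * x ^ 2)) atTop (nhds 0) := by
  have h := rpow_mul_exp_neg_mul_sq_isLittleO_exp_neg (b := (2⁻¹:ℝ)) (by norm_num) 1
  have h2 : Tendsto (fun x : ℝ => rexp (-(1/2) * x)) atTop (nhds 0) :=
    tendsto_exp_atBot.comp (tendsto_id.const_mul_atTop_of_neg (by norm_num))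
  have h3 := h.tendsto_zero_of_tendsto h2
  simpa [Real.rpow_one] using h3

lemma gaussAux_tendsto_bot :
    Tendsto (fun x : ℝ => x * rexp (-(2⁻¹:ℝ) * x ^ 2)) atBot (nhds 0) := by
  have h := (gaussAux_tendsto_top.comp tendsto_neg_atBot_atTop).neg
  rw [neg_zero] at h
  refine h.congr fun x => ?_
  simp only [Function.comp_apply, neg_sq]
  ring

lemma gaussAux_deriv_integrable :
    Integrable (fun x : ℝ => (1 - x ^ 2) * rexp (-(2⁻¹:ℝ) * x ^ 2)) := by
  have h1 := integrable_exp_neg_mul_sq (b := (2⁻¹:ℝ)) (by norm_num)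
  have := h1.sub gaussAux_sq_integrable
  convert this using 1
  funext x
  simp only [Pi.sub_apply]
  ring

lemma gaussAux_key :
    ∫ x : ℝ, (1 - x ^ 2) * rexp (-(2⁻¹:ℝ) * x ^ 2) = 0 := by
  rw [← integral_add_compl (measurableSet_Iic (a := (0:ℝ))) gaussAux_deriv_integrable,
    compl_Iic]
  rw [integral_Iic_of_hasDerivAt_of_tendsto
      (f := fun x : ℝ => x * rexp (-(2⁻¹:ℝ) * x ^ 2))
      ((gaussAux_deriv 0).continuousAt.continuousWithinAt)
      (fun x _ => gaussAux_deriv x) gaussAux_deriv_integrable.integrableOn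
      gaussAux_tendsto_bot,
    integral_Ioi_of_hasDerivAt_of_tendsto
      (f := fun x : ℝ => x * rexp (-(2⁻¹:ℝ) * x ^ 2))
      ((gaussAux_deriv 0).continuousAt.continuousWithinAt)
      (fun x _ => gaussAux_deriv x) gaussAux_deriv_integrable.integrableOn
      gaussAux_tendsto_top]
  simp

lemma gaussAux_sq_eq :
    ∫ x : ℝ, x ^ 2 * rexp (-(2⁻¹:ℝ) * x ^ 2) = ∫ x : ℝ, rexp (-(2⁻¹:ℝ) * x ^ 2) := by
  have key := gaussAux_key
  have h1 := integrable_exp_neg_mul_sq (b := (2⁻¹:ℝ)) (by norm_num)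
  simp_rw [sub_mul, one_mul] at key
  rw [integral_sub h1 gaussAux_sq_integrable] at key
  linarith

lemma gaussAux_odd :
    ∫ x : ℝ, x * rexp (-(2⁻¹:ℝ) * x ^ 2) = 0 := by
  have h := integral_neg_eq_self (fun x : ℝ => x * rexp (-(2⁻¹:ℝ) * x ^ 2))
    (volume : Measure ℝ)
  simp only [neg_sq, neg_mul] at h
  rw [integral_neg] at h
  simp only [neg_mul]
  linarith

lemma gaussAux_pdf01 (x : ℝ) :
    gaussianPDFReal 0 1 x = (√(2 * π))⁻¹ * rexp (-(2⁻¹:ℝ) * x ^ 2) := by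
  simp only [gaussianPDFReal, NNReal.coe_one, mul_one, sub_zero]
  congr 1
  ring

lemma gaussAux_integral_eq (f : ℝ → ℝ) :
    ∫ x, f x ∂(gaussianReal 0 1) = ∫ x, gaussianPDFReal 0 1 x * f x := by
  rw [gaussianReal_of_var_ne_zero 0 one_ne_zero]
  have hpdf : gaussianPDF 0 1 = fun x => ((gaussianPDFReal 0 1 x).toNNReal : ℝ≥0∞) := rfl
  rw [hpdf, integral_withDensity_eq_integral_smul
    (measurable_gaussianPDFReal 0 1).real_toNNReal f]
  congr 1
  funext x
  rw [NNReal.smul_def, Real.coe_toNNReal _ (gaussianPDFReal_nonneg _ _ _), smul_eq_mul]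

lemma gaussAux_integrable_iff (f : ℝ → ℝ) :
    Integrable f (gaussianReal 0 1) ↔
      Integrable (fun x => gaussianPDFReal 0 1 x * f x) volume := by
  rw [gaussianReal_of_var_ne_zero 0 one_ne_zero]
  have hpdf : gaussianPDF 0 1 = fun x => ((gaussianPDFReal 0 1 x).toNNReal : ℝ≥0∞) := rfl
  rw [hpdf, integrable_withDensity_iff_integrable_smul
    (measurable_gaussianPDFReal 0 1).real_toNNReal]
  constructor <;> intro h <;> refine h.congr (Filter.Eventually.of_forall fun x => ?_) <;>
    simp only [NNReal.smul_def, smul_eq_mul,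
      Real.coe_toNNReal _ (gaussianPDFReal_nonneg 0 1 x)]

lemma gaussAux_integrable_id : Integrable (fun x : ℝ => x) (gaussianReal 0 1) := by
  rw [gaussAux_integrable_iff]
  have := (integrable_mul_exp_neg_mul_sq (b := (2⁻¹:ℝ)) (by norm_num)).const_mul (√(2 * π))⁻¹
  refine this.congr (Filter.Eventually.of_forall fun x => ?_)
  simp only [gaussAux_pdf01]
  ring

lemma gaussAux_integrable_sq : Integrable (fun x : ℝ => x * x) (gaussianReal 0 1) := by
  rw [gaussAux_integrable_iff]
  have := gaussAux_sq_integrable.const_mul (√(2 * π))⁻¹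
  refine this.congr (Filter.Eventually.of_forall fun x => ?_)
  simp only [gaussAux_pdf01]
  ring

lemma gaussAux_moment1 : ∫ x, x ∂(gaussianReal 0 1) = 0 := by
  rw [gaussAux_integral_eq]
  have : ∀ x : ℝ, gaussianPDFReal 0 1 x * x
      = (√(2 * π))⁻¹ * (x * rexp (-(2⁻¹:ℝ) * x ^ 2)) := fun x => by
    rw [gaussAux_pdf01]; ring
  simp_rw [this, integral_const_mul, gaussAux_odd, mul_zero]

lemma gaussAux_moment2 : ∫ x, x * x ∂(gaussianReal 0 1) = 1 := by
  rw [gaussAux_integral_eq]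
  have : ∀ x : ℝ, gaussianPDFReal 0 1 x * (x * x)
      = (√(2 * π))⁻¹ * (x ^ 2 * rexp (-(2⁻¹:ℝ) * x ^ 2)) := fun x => by
    rw [gaussAux_pdf01]; ring
  simp_rw [this, integral_const_mul, gaussAux_sq_eq]
  have h1 := integral_gaussianPDFReal_eq_one 0 (one_ne_zero (α := ℝ≥0))
  calc (√(2 * π))⁻¹ * ∫ x : ℝ, rexp (-(2⁻¹:ℝ) * x ^ 2)
      = ∫ x : ℝ, gaussianPDFReal 0 1 x := by
        rw [← integral_const_mul]
        congr 1
        funext x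
        rw [gaussAux_pdf01]
    _ = 1 := h1


section PiGauss

variable {E : Type*} [Fintype E] [DecidableEq E]

lemma gaussAux_prod_repr (k l : E) (y : E → ℝ) :
    y k * y l = ∏ m, ((if m = k then y m else 1) * (if m = l then y m else 1)) := by
  rw [Finset.prod_mul_distrib, Finset.prod_ite_eq' Finset.univ k (fun m => y m),
    Finset.prod_ite_eq' Finset.univ l (fun m => y m)]
  simp

lemma gaussAux_factor_int (k l m : E) :
    Integrable (fun x : ℝ => (if m = k then x else 1) * (if m = l then x else 1))
      (gaussianReal 0 1) := by
  by_cases hk : m = k <;> by_cases hl : m = l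
  · simp only [if_pos hk, if_pos hl]; exact gaussAux_integrable_sq
  · simp only [if_pos hk, if_neg hl, mul_one]; exact gaussAux_integrable_id
  · simp only [if_neg hk, if_pos hl, one_mul]; exact gaussAux_integrable_id
  · simp only [if_neg hk, if_neg hl, mul_one]; exact integrable_const (1:ℝ)

lemma gaussAux_pi_cov (k l : E) :
    ∫ y : E → ℝ, y k * y l ∂(Measure.pi fun _ : E => gaussianReal 0 1)
      = if k = l then 1 else 0 := by
  letI : MeasureSpace ℝ := ⟨gaussianReal 0 1⟩
  haveI : SigmaFinite (volume : Measure ℝ) :=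
    inferInstanceAs (SigmaFinite (gaussianReal 0 1))
  haveI : IsProbabilityMeasure (volume : Measure ℝ) :=
    inferInstanceAs (IsProbabilityMeasure (gaussianReal 0 1))
  have hvol : (Measure.pi fun _ : E => gaussianReal 0 1) = (volume : Measure (E → ℝ)) := rfl
  rw [hvol]
  simp_rw [gaussAux_prod_repr k l]
  rw [integral_fintype_prod_volume_eq_prod
    (f := fun m (x : ℝ) => (if m = k then x else 1) * (if m = l then x else 1))]
  by_cases hkl : k = l
  · subst hkl
    rw [if_pos rfl, Finset.prod_eq_single k]
    · simp only [if_pos rfl]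
      exact gaussAux_moment2
    · intro m _ hm
      simp only [if_neg hm, one_mul]
      simp
    · simp
  · rw [if_neg hkl]
    refine Finset.prod_eq_zero (Finset.mem_univ k) ?_
    simp only [if_pos rfl, if_neg hkl, mul_one]
    exact gaussAux_moment1

lemma gaussAux_pi_integrable (k l : E) :
    Integrable (fun y : E → ℝ => y k * y l)
      (Measure.pi fun _ : E => gaussianReal 0 1) := by
  letI : MeasureSpace ℝ := ⟨gaussianReal 0 1⟩
  haveI : SigmaFinite (volume : Measure ℝ) :=
    inferInstanceAs (SigmaFinite (gaussianReal 0 1))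
  have hvol : (Measure.pi fun _ : E => gaussianReal 0 1) = (volume : Measure (E → ℝ)) := rfl
  rw [hvol]
  simp_rw [gaussAux_prod_repr k l]
  exact Integrable.fintype_prod (f := fun m (x : ℝ) =>
    (if m = k then x else 1) * (if m = l then x else 1)) (fun m => gaussAux_factor_int k l m)

end PiGauss

open MeasureTheory ProbabilityTheory

/-- The edge displacement coordinates `w = Bᵀ P y` of a Gaussian random embedding,
with `y` sampled from the standard Gaussian product measure `γ` on `ℝ^E`, have
covariance matrix `Bᵀ P`. -/
theorem displacement_covariance
    {V E : Type*} [Fintype V] [Fintype E] [DecidableEq V]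
    (head tail : E → V)
    (B : Matrix V E ℝ) (hB : B = incidenceMatrix head tail)
    (P : Matrix V E ℝ) (hP : IsMoorePenroseInverse Bᵀ P)
    (γ : Measure (E → ℝ)) (hγ : γ = Measure.pi fun _ : E => gaussianReal 0 1) :
    ∀ i j : E,
      ∫ y : E → ℝ, (Bᵀ.mulVec (P.mulVec y) i) * (Bᵀ.mulVec (P.mulVec y) j) ∂γ
        = (Bᵀ * P) i j := by

  classical
  intro i j
  subst hγ
  set M : Matrix E E ℝ := Bᵀ * P with hM
  have hMsymm : Mᵀ = M := hP.2.2.1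
  have hMidem : M * M = M := by
    calc M * M = Bᵀ * (P * Bᵀ * P) := by
          rw [hM, Matrix.mul_assoc, ← Matrix.mul_assoc P]
    _ = M := by rw [hP.2.1, hM]
  have hrw : ∀ y : E → ℝ, Bᵀ.mulVec (P.mulVec y) = M.mulVec y := fun y =>
    Matrix.mulVec_mulVec y Bᵀ P
  have hexp : ∀ y : E → ℝ, (M.mulVec y i) * (M.mulVec y j)
      = ∑ k, ∑ l, (M i k * M j l) * (y k * y l) := by
    intro y
    simp only [Matrix.mulVec, dotProduct, Finset.sum_mul_sum]
    exact Finset.sum_congr rfl fun k _ => Finset.sum_congr rfl fun l _ => by ring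
  calc ∫ y : E → ℝ, (Bᵀ.mulVec (P.mulVec y) i) * (Bᵀ.mulVec (P.mulVec y) j)
        ∂(Measure.pi fun _ : E => gaussianReal 0 1)
      = ∫ y : E → ℝ, ∑ k, ∑ l, (M i k * M j l) * (y k * y l)
        ∂(Measure.pi fun _ : E => gaussianReal 0 1) := by
        congr 1
        funext y
        rw [hrw y, hexp y]
    _ = ∑ k, ∑ l, (M i k * M j l) * ∫ y : E → ℝ, y k * y l
        ∂(Measure.pi fun _ : E => gaussianReal 0 1) := by
        rw [integral_finset_sum _ (fun k _ => integrable_finset_sum _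
          (fun l _ => (gaussAux_pi_integrable k l).const_mul _))]
        exact Finset.sum_congr rfl fun k _ => by
          rw [integral_finset_sum _ (fun l _ => (gaussAux_pi_integrable k l).const_mul _)]
          exact Finset.sum_congr rfl fun l _ => integral_const_mul _ _
    _ = ∑ k, M i k * M j k := by
        simp only [gaussAux_pi_cov, mul_ite, mul_one, mul_zero]
        exact Finset.sum_congr rfl fun k _ => by simp
    _ = (M * Mᵀ) i j := by
        simp [Matrix.mul_apply, Matrix.transpose_apply]
    _ = (Bᵀ * P) i j := by rw [hMsymm, hMidem]
end

section
/- Let B be the signed incidence matrix of a directed multigraph G and let P be the Moore–Penrose pseudoinverse of Bᵀ. Then the matrix P Pᵀ is the Moore–Penrose pseudoinverse of the graph Laplacian L = B Bᵀ; that is, P Pᵀ satisfies the four Moore–Penrose conditions with respect to B Bᵀ. -/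
open Matrix

/-- If `P` is the Moore–Penrose pseudoinverse of `Bᵀ`, then `P Pᵀ` is the
Moore–Penrose pseudoinverse of the graph Laplacian `L = B Bᵀ`. -/
theorem pinv_laplacian
    {V E : Type*} [Fintype V] [Fintype E] [DecidableEq V]
    (head tail : E → V)
    (B : Matrix V E ℝ) (hB : B = incidenceMatrix head tail)
    (P : Matrix V E ℝ) (hP : IsMoorePenroseInverse Bᵀ P) :
    IsMoorePenroseInverse (B * Bᵀ) (P * Pᵀ) := by
  obtain ⟨h1, h2, h3, h4⟩ := hP
  have hBP : B * Pᵀ = P * Bᵀ := by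
    have := h4
    rwa [Matrix.transpose_mul, Matrix.transpose_transpose] at this
  have hPB : Pᵀ * B = Bᵀ * P := by
    have := h3
    rwa [Matrix.transpose_mul, Matrix.transpose_transpose] at this
  have hBPB : B * Pᵀ * B = B := by
    have := congrArg Matrix.transpose h1
    simpa [Matrix.transpose_mul, Matrix.mul_assoc] using this
  have hLX : B * Bᵀ * (P * Pᵀ) = P * Bᵀ := by
    calc B * Bᵀ * (P * Pᵀ) = B * (Pᵀ * B) * Pᵀ := by
          rw [hPB]; simp only [Matrix.mul_assoc]
      _ = (B * Pᵀ) * (B * Pᵀ) := by simp only [Matrix.mul_assoc]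
      _ = (P * Bᵀ * P) * Bᵀ := by rw [hBP]; simp only [Matrix.mul_assoc]
      _ = P * Bᵀ := by rw [h2]
  have hXL : P * Pᵀ * (B * Bᵀ) = P * Bᵀ := by
    calc P * Pᵀ * (B * Bᵀ) = P * (Bᵀ * P) * Bᵀ := by
          rw [← hPB]; simp only [Matrix.mul_assoc]
      _ = (P * Bᵀ * P) * Bᵀ := by simp only [Matrix.mul_assoc]
      _ = P * Bᵀ := by rw [h2]
  refine ⟨?_, ?_, ?_, ?_⟩
  · calc B * Bᵀ * (P * Pᵀ) * (B * Bᵀ) = P * Bᵀ * (B * Bᵀ) := by rw [hLX]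
      _ = (B * Pᵀ * B) * Bᵀ := by rw [hBP]; simp only [Matrix.mul_assoc]
      _ = B * Bᵀ := by rw [hBPB]
  · calc P * Pᵀ * (B * Bᵀ) * (P * Pᵀ) = P * Bᵀ * (P * Pᵀ) := by rw [hXL]
      _ = (P * Bᵀ * P) * Pᵀ := by simp only [Matrix.mul_assoc]
      _ = P * Pᵀ := by rw [h2]
  · rw [hLX, h4]
  · rw [hXL, h4]
end

section
/- Let B be the signed incidence matrix of a directed multigraph G and let P be the Moore–Penrose pseudoinverse of Bᵀ. Then for every u ∈ ℝ^E, the vertex vector P u is centered: Σ_{i∈V} (P u)_i = 0. -/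
open Matrix

/-- For every `u ∈ ℝ^E`, the vertex vector `P u` is centered: its coordinates sum
to zero. Here `P` is the Moore–Penrose pseudoinverse of `Bᵀ`. -/
theorem pinv_vertex_vector_centered
    {V E : Type*} [Fintype V] [Fintype E] [DecidableEq V]
    (head tail : E → V)
    (B : Matrix V E ℝ) (hB : B = incidenceMatrix head tail)
    (P : Matrix V E ℝ) (hP : IsMoorePenroseInverse Bᵀ P) :
    ∀ u : E → ℝ, ∑ i, P.mulVec u i = 0 := by
  obtain ⟨h1, h2, h3, h4⟩ := hP
  -- column sums of B are zero
  have hones : (fun _ : V => (1 : ℝ)) ᵥ* B = 0 := by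
    funext e
    simp only [vecMul, dotProduct, one_mul, hB, incidenceMatrix, Pi.zero_apply]
    by_cases h : head e = tail e
    · simp [h]
    · simp only [h, if_false]
      have hsplit : ∀ i : V, (if i = head e then (1 : ℝ) else if i = tail e then -1 else 0)
          = (if i = head e then 1 else 0) + (if i = tail e then -1 else 0) := by
        intro i
        split_ifs with h1 h2 <;> simp_all
      rw [Finset.sum_congr rfl fun i _ => hsplit i, Finset.sum_add_distrib]
      simp
  -- P * Bᵀ = B * Pᵀ
  have hPB : P * Bᵀ = B * Pᵀ := by
    conv_lhs => rw [← h4]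
    rw [transpose_mul, transpose_transpose]
  have key : (fun _ : V => (1 : ℝ)) ᵥ* P = 0 := by
    conv_lhs => rw [← h2, hPB]
    rw [← Matrix.vecMul_vecMul, ← Matrix.vecMul_vecMul, hones, Matrix.zero_vecMul,
      Matrix.zero_vecMul]
  intro u
  have : ∑ i, P.mulVec u i = (fun _ : V => (1 : ℝ)) ⬝ᵥ P.mulVec u := by
    simp [dotProduct]
  rw [this, Matrix.dotProduct_mulVec, key, zero_dotProduct]
end

section
/- For every integer n ≥ 2, Σ_{j=1}^{n−1} (1/4) · (sin(πj/n))^{−2} = (n² − 1)/12. Equivalently, the trace of the Moore–Penrose pseudoinverse of the Laplacian of the n-cycle — the expected squared norm E(‖x^k‖²) of one coordinate vector of a Gaussian random embedding of the n-cycle — equals (n² − 1)/12. -/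
open Finset Complex

private lemma abel_step (n : ℕ) (ω : ℂ) (c : ℕ → ℂ) :
    (ω - 1) * ∑ k ∈ range n, c k * ω ^ k
      = c n * ω ^ n - c 0 + ω * ∑ k ∈ range n, (c k - c (k + 1)) * ω ^ k := by
  induction n with
  | zero => simp
  | succ m ih =>
    rw [sum_range_succ, sum_range_succ, mul_add, ih]
    ring

private lemma sum_cast_range (n : ℕ) : ∑ k ∈ range n, (k : ℂ) = n * (n - 1) / 2 := by
  induction n with
  | zero => simp
  | succ m ih => rw [sum_range_succ, ih]; push_cast; ring

private lemma sum_sq_cast_range (n : ℕ) :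
    ∑ k ∈ range n, (k : ℂ) ^ 2 = n * (n - 1) * (2 * n - 1) / 6 := by
  induction n with
  | zero => simp
  | succ m ih => rw [sum_range_succ, ih]; push_cast; ring

private lemma key_identity (n : ℕ) (hn : 2 ≤ n) (ω : ℂ) (hωn : ω ^ n = 1) (hω1 : ω ≠ 1) :
    (ω - 1) ^ 2 * ∑ k ∈ range n, (k : ℂ) * ((k : ℂ) - n) / (2 * n) * ω ^ k = -ω := by
  have hn0 : (n : ℂ) ≠ 0 := Nat.cast_ne_zero.2 (by omega)
  have geom : ∑ k ∈ range n, ω ^ k = 0 := by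
    rw [geom_sum_eq hω1, hωn, sub_self, zero_div]
  set g : ℕ → ℂ := fun k => (k : ℂ) * ((k : ℂ) - n) / (2 * n) with hg
  set h : ℕ → ℂ := fun k => g k - g (k + 1) with hh
  have h1 : (ω - 1) * ∑ k ∈ range n, g k * ω ^ k
      = g n * ω ^ n - g 0 + ω * ∑ k ∈ range n, h k * ω ^ k := abel_step n ω g
  have h2 : (ω - 1) * ∑ k ∈ range n, h k * ω ^ k
      = h n * ω ^ n - h 0 + ω * ∑ k ∈ range n, (h k - h (k + 1)) * ω ^ k := abel_step n ω h
  have hsum : ∑ k ∈ range n, (h k - h (k + 1)) * ω ^ k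
      = (1 / n) * ∑ k ∈ range n, ω ^ k := by
    rw [mul_sum]
    refine sum_congr rfl fun k _ => ?_
    have : h k - h (k + 1) = 1 / n := by
      simp only [hh, hg]
      push_cast
      field_simp
      ring_nf <;> simp
    rw [this]
  have hgn : g n = 0 := by simp [hg]
  have hg0 : g 0 = 0 := by simp [hg]
  have hdiff : h n - h 0 = -1 := by
    simp only [hh, hg, hgn, hg0]
    push_cast
    field_simp
    ring_nf <;> simp
  have e2 : (ω - 1) * ∑ k ∈ range n, h k * ω ^ k = -1 := by
    rw [h2, hsum, geom, hωn]
    linear_combination hdiff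
  calc (ω - 1) ^ 2 * ∑ k ∈ range n, g k * ω ^ k
      = (ω - 1) * ((ω - 1) * ∑ k ∈ range n, g k * ω ^ k) := by ring
    _ = (ω - 1) * (ω * ∑ k ∈ range n, h k * ω ^ k) := by
        rw [h1, hgn, hg0, hωn]; ring
    _ = ω * ((ω - 1) * ∑ k ∈ range n, h k * ω ^ k) := by ring
    _ = -ω := by rw [e2]; ring

/-- For every integer `n ≥ 2`,
`Σ_{j=1}^{n-1} (1/4) csc²(πj/n) = (n² - 1)/12`: the trace of the Moore–Penrose
pseudoinverse of the Laplacian of the `n`-cycle, i.e. the expected squared norm of a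
coordinate vector of a Gaussian random embedding of the `n`-cycle, is `(n² - 1)/12`. -/
theorem sum_csc_sq_eq (n : ℕ) (hn : 2 ≤ n) :
    ∑ j ∈ Finset.Ico 1 n, (1 / 4 : ℝ) * (Real.sin (Real.pi * j / n) ^ 2)⁻¹
      = ((n : ℝ) ^ 2 - 1) / 12 := by
  have hnR : (n : ℝ) ≠ 0 := Nat.cast_ne_zero.2 (by omega)
  have hnC : (n : ℂ) ≠ 0 := Nat.cast_ne_zero.2 (by omega)
  -- Step 1: rewrite each term as (2 - 2 cos(2πj/n))⁻¹
  have step1 : ∀ j ∈ Finset.Ico 1 n,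
      (1 / 4 : ℝ) * (Real.sin (Real.pi * j / n) ^ 2)⁻¹
        = (2 - 2 * Real.cos (2 * Real.pi * j / n))⁻¹ := by
    intro j hj
    have h1 : Real.sin (Real.pi * j / n) ^ 2
        = 1 / 2 - Real.cos (2 * (Real.pi * j / n)) / 2 := Real.sin_sq_eq_half_sub _
    have h2 : 2 * (Real.pi * j / n) = 2 * Real.pi * j / n := by ring
    rw [h1, h2, show (1 / 2 - Real.cos (2 * Real.pi * j / n) / 2)
      = (2 - 2 * Real.cos (2 * Real.pi * j / n)) / 4 by ring, inv_div]
    ring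
  rw [Finset.sum_congr rfl step1, ← Complex.ofReal_inj]
  push_cast
  -- Step 2: identify each term with a complex sum over roots of unity
  set ζ : ℂ := Complex.exp (2 * Real.pi * I / n) with hζdef
  have hζ : IsPrimitiveRoot ζ n := Complex.isPrimitiveRoot_exp n (by omega)
  set g : ℕ → ℂ := fun k => (k : ℂ) * ((k : ℂ) - n) / (2 * n) with hg
  have step2 : ∀ j ∈ Finset.Ico 1 n,
      ((2 : ℂ) - 2 * Complex.cos (2 * Real.pi * j / n))⁻¹
        = ∑ k ∈ range n, g k * (ζ ^ j) ^ k := by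
    intro j hj
    rw [Finset.mem_Ico] at hj
    set ω : ℂ := ζ ^ j with hωdef
    have hωn : ω ^ n = 1 := by
      rw [hωdef, ← pow_mul, mul_comm, pow_mul, hζ.pow_eq_one, one_pow]
    have hω1 : ω ≠ 1 := hζ.pow_ne_one_of_pos_of_lt (by omega) hj.2
    have hω0 : ω ≠ 0 := by
      rw [hωdef, hζdef]
      exact pow_ne_zero _ (Complex.exp_ne_zero _)
    have hωexp : ω = Complex.exp ((2 * Real.pi * j / n : ℂ) * I) := by
      rw [hωdef, hζdef, ← Complex.exp_nat_mul]
      ring_nf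
    have hcos : (2 : ℂ) - 2 * Complex.cos (2 * Real.pi * j / n) = 2 - ω - ω⁻¹ := by
      have := Complex.two_cos (2 * Real.pi * j / n : ℂ)
      rw [show -(2 * Real.pi * j / n : ℂ) * I = -((2 * Real.pi * j / n : ℂ) * I) by ring,
        Complex.exp_neg] at this
      rw [← hωexp] at this
      linear_combination -this
    have hkey := key_identity n hn ω hωn hω1
    rw [hcos]
    apply inv_eq_of_mul_eq_one_left
    have hsub : ω - 1 ≠ 0 := sub_ne_zero.2 hω1
    field_simp
    linear_combination -hkey
  rw [Finset.sum_congr rfl step2]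
  -- Step 3: swap the order of summation
  have swap : ∑ j ∈ Finset.Ico 1 n, ∑ k ∈ range n, g k * (ζ ^ j) ^ k
      = ∑ k ∈ range n, g k * ∑ j ∈ Finset.Ico 1 n, (ζ ^ k) ^ j := by
    rw [Finset.sum_comm]
    refine sum_congr rfl fun k _ => ?_
    rw [mul_sum]
    refine sum_congr rfl fun j _ => ?_
    rw [← pow_mul, ← pow_mul, mul_comm j k]
  rw [swap]
  -- Step 4: evaluate the inner sums
  have inner : ∀ k ∈ range n, g k * ∑ j ∈ Finset.Ico 1 n, (ζ ^ k) ^ j = -g k := by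
    intro k hk
    rw [Finset.mem_range] at hk
    rcases Nat.eq_zero_or_pos k with hk0 | hk0
    · subst hk0
      simp [hg]
    · have hζk1 : ζ ^ k ≠ 1 := hζ.pow_ne_one_of_pos_of_lt hk0.ne' hk
      have hζkn : (ζ ^ k) ^ n = 1 := by
        rw [← pow_mul, mul_comm, pow_mul, hζ.pow_eq_one, one_pow]
      have hgeom : ∑ j ∈ range n, (ζ ^ k) ^ j = 0 := by
        rw [geom_sum_eq hζk1, hζkn, sub_self, zero_div]
      have hsplit : ∑ j ∈ range n, (ζ ^ k) ^ j
          = 1 + ∑ j ∈ Finset.Ico 1 n, (ζ ^ k) ^ j := by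
        rw [Finset.range_eq_Ico, Finset.sum_eq_sum_Ico_succ_bot (by omega)]
        simp
      have hval : ∑ j ∈ Finset.Ico 1 n, (ζ ^ k) ^ j = -1 := by
        rw [hsplit] at hgeom
        linear_combination hgeom
      rw [hval]; ring
  rw [Finset.sum_congr rfl inner]
  -- Step 5: evaluate the final polynomial sum
  calc ∑ k ∈ range n, -g k
      = ∑ k ∈ range n, ((n : ℂ) * (k : ℂ) - (k : ℂ) ^ 2) / (2 * n) := by
        refine sum_congr rfl fun k _ => ?_
        simp only [hg]
        field_simp
        ring
    _ = ((n : ℂ) * ∑ k ∈ range n, (k : ℂ) - ∑ k ∈ range n, (k : ℂ) ^ 2) / (2 * n) := by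
        rw [← Finset.sum_div, Finset.mul_sum, ← Finset.sum_sub_distrib]
    _ = ((n : ℂ) ^ 2 - 1) / 12 := by
        rw [sum_cast_range, sum_sq_cast_range]
        field_simp
        ring
end
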